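/- arXiv:math-ph/0102009 — 5 statements merged into one kernel-verified Lean document; each statement's English description precedes it below -/
import Mathlib

section
/- Toom's rule R preserves connectedness: if S is a connected subset of Z^2 (connected in the graph G where each point is adjacent to its north, south, east, west, north-west and south-east neighbors), then R(S) is connected or empty. -/
open Set

abbrev Pt := ℤ × ℤ

/-- Adjacency in the graph `G`: neighbor increments
`(0,1), (0,-1), (1,0), (-1,0), (-1,1), (1,-1)`. -/
def adjG (p q : Pt) : Prop :=
  q - p ∈ ({(0,1), (0,-1), (1,0), (-1,0), (-1,1), (1,-1)} : Set Pt)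

/-- Reachability within a set `S` along edges of `G`. -/
def ReachIn (S : Set Pt) (p q : Pt) : Prop :=
  Relation.ReflTransGen (fun a b => a ∈ S ∧ b ∈ S ∧ adjG a b) p q

/-- `S` is connected in the graph `G`. -/
def ConnectedIn (S : Set Pt) : Prop :=
  ∀ p ∈ S, ∀ q ∈ S, ReachIn S p q

/-- The tile with center `p`. -/
def tile (p : Pt) : Set Pt := {p, p + (1, 0), p + (0, 1)}

/-- Inflation operation `Q`. -/
def QOp (S : Set Pt) : Set Pt := ⋃ a ∈ S, tile a

/-- Toom's rule `R`: majority of self, north, east. -/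
def ROp (S : Set Pt) : Set Pt := {p | 2 ≤ (S ∩ tile p).ncard}

/-- The biased Toom rule `R⁺ = Q ∘ R ∘ R`. -/
def RPlus (S : Set Pt) : Set Pt := QOp (ROp (ROp S))

lemma tile_finite (p : Pt) : (tile p).Finite :=
  (Set.finite_singleton _).insert _ |>.insert _

lemma tiles_adj {c c' x : Pt} (h1 : x ∈ tile c) (h2 : x ∈ tile c') : c = c' ∨ adjG c c' := by
  simp only [tile, adjG, Set.mem_insert_iff, Set.mem_singleton_iff, Prod.ext_iff,
    Prod.fst_add, Prod.snd_add, Prod.fst_sub, Prod.snd_sub] at h1 h2 ⊢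
  omega

lemma step_reach {S : Set Pt} {p q : Pt} (hp : p ∈ ROp S) (hq : q ∈ ROp S)
    (h : (tile p ∩ tile q).Nonempty) : ReachIn (ROp S) p q := by
  obtain ⟨x, h1, h2⟩ := h
  rcases tiles_adj h1 h2 with rfl | hadj
  · exact Relation.ReflTransGen.refl
  · exact Relation.ReflTransGen.single ⟨hp, hq, hadj⟩

lemma mem_ROp_of_pair {S : Set Pt} {a b c : Pt} (ha : a ∈ S) (hb : b ∈ S) (hab : a ≠ b)
    (ha' : a ∈ tile c) (hb' : b ∈ tile c) : c ∈ ROp S := by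
  have hfin : (S ∩ tile c).Finite := (tile_finite c).inter_of_right S
  show 2 ≤ (S ∩ tile c).ncard
  have := (Set.one_lt_ncard_iff hfin).mpr ⟨a, b, ⟨ha, ha'⟩, ⟨hb, hb'⟩, hab⟩
  omega

/-- Every `G`-edge inside `S` is contained in a common tile whose center is in `R(S)`. -/
lemma edge_center {S : Set Pt} {a b : Pt} (ha : a ∈ S) (hb : b ∈ S) (hadj : adjG a b) :
    ∃ c, a ∈ tile c ∧ b ∈ tile c ∧ c ∈ ROp S := by
  simp only [adjG, Set.mem_insert_iff, Set.mem_singleton_iff, Prod.ext_iff,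
    Prod.fst_sub, Prod.snd_sub] at hadj
  have hab : a ≠ b := by
    intro heq
    rw [Prod.ext_iff] at heq
    omega
  have key : ∀ c : Pt, a ∈ tile c → b ∈ tile c → ∃ c, a ∈ tile c ∧ b ∈ tile c ∧ c ∈ ROp S :=
    fun c h1 h2 => ⟨c, h1, h2, mem_ROp_of_pair ha hb hab h1 h2⟩
  have mem : ∀ c x : Pt, (x.1 = c.1 ∧ x.2 = c.2) ∨ (x.1 = c.1 + 1 ∧ x.2 = c.2) ∨
      (x.1 = c.1 ∧ x.2 = c.2 + 1) → x ∈ tile c := by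
    intro c x h
    simp only [tile, Set.mem_insert_iff, Set.mem_singleton_iff, Prod.ext_iff,
      Prod.fst_add, Prod.snd_add]
    omega
  rcases hadj with h | h | h | h | h | h
  · exact key a (mem _ _ (by omega)) (mem _ _ (by omega))
  · exact key b (mem _ _ (by omega)) (mem _ _ (by omega))
  · exact key a (mem _ _ (by omega)) (mem _ _ (by omega))
  · exact key b (mem _ _ (by omega)) (mem _ _ (by omega))
  · exact key (a + (-1, 0)) (mem _ _ (by simp <;> omega)) (mem _ _ (by simp <;> omega))
  · exact key (a + (0, -1)) (mem _ _ (by simp <;> omega)) (mem _ _ (by simp <;> omega))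

lemma lift_path {S : Set Pt} {a b : Pt} (h : ReachIn S a b) :
    ∀ p ∈ ROp S, a ∈ tile p → ∀ q ∈ ROp S, b ∈ tile q → ReachIn (ROp S) p q := by
  induction h with
  | refl =>
    intro p hp hap q hq haq
    exact step_reach hp hq ⟨a, hap, haq⟩
  | tail _ hstep ih =>
    intro p hp hap q hq hcq
    obtain ⟨hbS, hcS, hadj⟩ := hstep
    obtain ⟨m, hbm, hcm, hmR⟩ := edge_center hbS hcS hadj
    exact (ih p hp hap m hmR hbm).trans (step_reach hmR hq ⟨_, hcm, hcq⟩)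

/-- Toom's rule preserves connectedness: if `S` is connected then `R(S)` is
connected or empty. -/
theorem toom_connected (S : Set Pt) (hS : ConnectedIn S) :
    ConnectedIn (ROp S) ∨ ROp S = ∅ := by
  by_cases h : ROp S = ∅
  · exact Or.inr h
  · left
    intro p hp q hq
    have hp2 : 2 ≤ (S ∩ tile p).ncard := hp
    have hq2 : 2 ≤ (S ∩ tile q).ncard := hq
    obtain ⟨a, haS, haT⟩ : (S ∩ tile p).Nonempty :=
      Set.nonempty_of_ncard_ne_zero (by omega)
    obtain ⟨b, hbS, hbT⟩ : (S ∩ tile q).Nonempty :=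
      Set.nonempty_of_ncard_ne_zero (by omega)
    exact lift_path (hS a haS b hbS) p hp haT q hq hbT
end

section
/- If sets A1, A2 ⊆ Z^2 contain points that are neighbors in the graph G, and A_j ⊆ D(I_j, 1/3) for triangles I_1, I_2, then there is a triangle I with span(I) ≤ span(I_1) + span(I_2) such that A_1 ∪ A_2 ⊆ D(I, 1/3). -/
open Set

/-- A triangle is given by parameters `(a,b,c)`; it is
`L(a,b,c) = {(α,β) : -α ≤ a, -β ≤ b, α+β ≤ c}` with span `a+b+c`. -/
abbrev Tri := ℝ × ℝ × ℝ

def triSpan (t : Tri) : ℝ := t.1 + t.2.1 + t.2.2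

/-- The lattice point `p` lies in the deflation by `d` of the triangle `t`. -/
def inDefl (t : Tri) (d : ℝ) (p : Pt) : Prop :=
  -(p.1 : ℝ) ≤ t.1 - d ∧ -(p.2 : ℝ) ≤ t.2.1 - d ∧ (p.1 : ℝ) + (p.2 : ℝ) ≤ t.2.2 - d

/-- `span(E, d)`: the minimum total span of a finite family of (nonempty)
triangles whose `d`-deflations cover `E`. -/
noncomputable def spanD (E : Set Pt) (d : ℝ) : ℝ :=
  sInf { s : ℝ | ∃ T : Finset Tri, (∀ t ∈ T, 0 ≤ triSpan t) ∧
    (∀ p ∈ E, ∃ t ∈ T, inDefl t d p) ∧ s = ∑ t ∈ T, triSpan t }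

/-- `Span(E) = span(E, 2)`. -/
noncomputable def SpanE (E : Set Pt) : ℝ := spanD E 2

/-- If `A1, A2` contain neighboring points and `A_j ⊆ D(I_j, 1/3)` then some
triangle `I` with `span(I) ≤ span(I1) + span(I2)` satisfies `A1 ∪ A2 ⊆ D(I, 1/3)`. -/
theorem triangles_union_neighbors (A1 A2 : Set Pt) (I1 I2 : Tri)
    (hadj : ∃ a ∈ A1, ∃ b ∈ A2, adjG a b)
    (h1 : ∀ p ∈ A1, inDefl I1 (1/3) p) (h2 : ∀ p ∈ A2, inDefl I2 (1/3) p) :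
    ∃ I : Tri, triSpan I ≤ triSpan I1 + triSpan I2 ∧
      ∀ p ∈ A1 ∪ A2, inDefl I (1/3) p := by
  obtain ⟨p, hp, q, hq, hadj⟩ := hadj
  obtain ⟨ha1, hb1, hc1⟩ := h1 p hp
  obtain ⟨ha2, hb2, hc2⟩ := h2 q hq
  obtain ⟨a1, b1, c1⟩ := I1
  obtain ⟨a2, b2, c2⟩ := I2
  simp only [adjG, Set.mem_insert_iff, Set.mem_singleton_iff, Prod.ext_iff,
    Prod.fst_sub, Prod.snd_sub, sub_eq_iff_eq_add] at hadj
  have hd : (-1 : ℝ) ≤ (q.1 : ℝ) - p.1 ∧ (q.1 : ℝ) - p.1 ≤ 1 ∧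
      (-1 : ℝ) ≤ (q.2 : ℝ) - p.2 ∧ (q.2 : ℝ) - p.2 ≤ 1 ∧
      (-1 : ℝ) ≤ (q.1 : ℝ) + q.2 - p.1 - p.2 ∧ (q.1 : ℝ) + q.2 - p.1 - p.2 ≤ 1 := by
    rcases hadj with ⟨e1, e2⟩ | ⟨e1, e2⟩ | ⟨e1, e2⟩ | ⟨e1, e2⟩ | ⟨e1, e2⟩ | ⟨e1, e2⟩ <;>
      rw [e1, e2] <;> simp only [Prod.fst_add, Prod.snd_add] <;> push_cast <;>
      exact ⟨by linarith, by linarith, by linarith, by linarith, by linarith, by linarith⟩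
  obtain ⟨d1, d2, d3, d4, d5, d6⟩ := hd
  refine ⟨(max a1 a2, max b1 b2, max c1 c2), ?_, ?_⟩
  · simp only [triSpan] at *
    rcases max_cases a1 a2 with ⟨e1, _⟩ | ⟨e1, _⟩ <;>
      rcases max_cases b1 b2 with ⟨e2, _⟩ | ⟨e2, _⟩ <;>
      rcases max_cases c1 c2 with ⟨e3, _⟩ | ⟨e3, _⟩ <;>
      rw [e1, e2, e3] <;> simp only [inDefl] at * <;> linarith
  · rintro r (hr | hr)
    · obtain ⟨x, y, z⟩ := h1 r hr
      exact ⟨le_trans x (by simp [le_max_left]), le_trans y (by simp [le_max_left]),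
        le_trans z (by simp [le_max_left])⟩
    · obtain ⟨x, y, z⟩ := h2 r hr
      exact ⟨le_trans x (by simp [le_max_right]), le_trans y (by simp [le_max_right]),
        le_trans z (by simp [le_max_right])⟩
end

section
/- The inflation and Toom operations satisfy the commutation inclusion Q(R(S)) ⊆ R(Q(S)) for every S ⊆ Z^2. -/
open Set

set_option maxHeartbeats 1000000 in
lemma geo (a x u v : Pt) (hu : u ∈ tile a) (hv : v ∈ tile a) (huv : u ≠ v)
    (hx : x ∈ tile a) :
    ∃ p q, p ≠ q ∧ p ∈ tile x ∧ q ∈ tile x ∧ p ∈ tile u ∪ tile v ∧ q ∈ tile u ∪ tile v := by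
  simp only [tile, mem_insert_iff, mem_singleton_iff, Prod.ext_iff,
    Prod.fst_add, Prod.snd_add, Prod.mk.injEq, ne_eq] at hu hv hx huv
  rcases hu with h1 | h1 | h1 <;> rcases hv with h2 | h2 | h2 <;>
    rcases hx with h3 | h3 | h3 <;>
    first
      | (refine ⟨u, v, ?_, ?_, ?_, ?_, ?_⟩ <;>
          simp only [tile, mem_insert_iff, mem_singleton_iff, mem_union, Prod.ext_iff,
            Prod.fst_add, Prod.snd_add, Prod.mk.injEq, ne_eq, eq_self_iff_true,
            true_and, and_true, true_or, or_true] <;> omega)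
      | (refine ⟨u, u + (1,0), ?_, ?_, ?_, ?_, ?_⟩ <;>
          simp only [tile, mem_insert_iff, mem_singleton_iff, mem_union, Prod.ext_iff,
            Prod.fst_add, Prod.snd_add, Prod.mk.injEq, ne_eq, eq_self_iff_true,
            true_and, and_true, true_or, or_true] <;> omega)
      | (refine ⟨u, u + (0,1), ?_, ?_, ?_, ?_, ?_⟩ <;>
          simp only [tile, mem_insert_iff, mem_singleton_iff, mem_union, Prod.ext_iff,
            Prod.fst_add, Prod.snd_add, Prod.mk.injEq, ne_eq, eq_self_iff_true,
            true_and, and_true, true_or, or_true] <;> omega)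
      | (refine ⟨v, v + (1,0), ?_, ?_, ?_, ?_, ?_⟩ <;>
          simp only [tile, mem_insert_iff, mem_singleton_iff, mem_union, Prod.ext_iff,
            Prod.fst_add, Prod.snd_add, Prod.mk.injEq, ne_eq, eq_self_iff_true,
            true_and, and_true, true_or, or_true] <;> omega)
      | (refine ⟨v, v + (0,1), ?_, ?_, ?_, ?_, ?_⟩ <;>
          simp only [tile, mem_insert_iff, mem_singleton_iff, mem_union, Prod.ext_iff,
            Prod.fst_add, Prod.snd_add, Prod.mk.injEq, ne_eq, eq_self_iff_true,
            true_and, and_true, true_or, or_true] <;> omega)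
      | (refine ⟨u + (1,0), v + (1,0), ?_, ?_, ?_, ?_, ?_⟩ <;>
          simp only [tile, mem_insert_iff, mem_singleton_iff, mem_union, Prod.ext_iff,
            Prod.fst_add, Prod.snd_add, Prod.mk.injEq, ne_eq, eq_self_iff_true,
            true_and, and_true, true_or, or_true] <;> omega)
      | (refine ⟨u + (0,1), v + (0,1), ?_, ?_, ?_, ?_, ?_⟩ <;>
          simp only [tile, mem_insert_iff, mem_singleton_iff, mem_union, Prod.ext_iff,
            Prod.fst_add, Prod.snd_add, Prod.mk.injEq, ne_eq, eq_self_iff_true,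
            true_and, and_true, true_or, or_true] <;> omega)

/-- Commutation property: `Q(R(S)) ⊆ R(Q(S))`. -/
theorem QR_subset_RQ (S : Set Pt) : QOp (ROp S) ⊆ ROp (QOp S) := by
  intro x hx
  rw [QOp, mem_iUnion₂] at hx
  obtain ⟨a, ha, hxa⟩ := hx
  have hfin : (S ∩ tile a).Finite := (tile_finite a).subset inter_subset_right
  obtain ⟨u, v, hu, hv, huv⟩ := (Set.one_lt_ncard_iff hfin).1 ha
  obtain ⟨p, q, hpq, hpx, hqx, hpuv, hquv⟩ := geo a x u v hu.2 hv.2 huv hxa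
  have hQ : ∀ w ∈ S, tile w ⊆ QOp S := fun w hw => subset_biUnion_of_mem hw
  have hpQ : p ∈ QOp S := hpuv.elim (fun h => hQ u hu.1 h) (fun h => hQ v hv.1 h)
  have hqQ : q ∈ QOp S := hquv.elim (fun h => hQ u hu.1 h) (fun h => hQ v hv.1 h)
  have hfin2 : (QOp S ∩ tile x).Finite := (tile_finite x).subset inter_subset_right
  exact (Set.one_lt_ncard_iff hfin2).2 ⟨p, q, ⟨hpQ, hpx⟩, ⟨hqQ, hqx⟩, hpq⟩
end

section
/- (Cut decomposition lemma) Let (C,A,B) be a closed cut of a connected set S ⊆ Z^2 with |C| < θ(S,α,β). Decompose A ∪ C into connected components U_1, U_2, … and B ∪ C into connected components V_1, V_2, …. Then either Span(U_i) ≤ α·|U_i ∩ C| + β for all i, or Span(V_j) ≤ α·|V_j ∩ C| + β for all j. -/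
open Set

/-- `(C, A1, A2)` is a cut of `S`: disjoint subsets of `S` such that every
path in `S` from `A1` to `A2` passes through `C`. -/
def IsCut (S C A1 A2 : Set Pt) : Prop :=
  C ⊆ S ∧ A1 ⊆ S ∧ A2 ⊆ S ∧
  Disjoint C A1 ∧ Disjoint C A2 ∧ Disjoint A1 A2 ∧
  ∀ p ∈ A1, ∀ q ∈ A2, ¬ ReachIn (S \ C) p q

/-- `bdry S A`: elements of `S \ A` adjacent to an element of `A`. -/
def bdry (S A : Set Pt) : Set Pt := {b | b ∈ S ∧ b ∉ A ∧ ∃ a ∈ A, adjG a b}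

def IsClosedCut (S C A1 A2 : Set Pt) : Prop :=
  IsCut S C A1 A2 ∧ bdry S A1 ∪ bdry S A2 ⊆ C

def IsConnCut (S C A1 A2 : Set Pt) : Prop :=
  IsCut S C A1 A2 ∧ ConnectedIn (A1 ∪ C) ∧ ConnectedIn (A2 ∪ C)

/-- `θ(S, α, β)`: the smallest `k` such that `S` has a connected cut with
cutting set of size `k` and `min_j Span(A_j ∪ C) > α k + β`; `∞` if none. -/
noncomputable def theta (S : Set Pt) (α β : ℝ) : ℕ∞ :=
  sInf { k : ℕ∞ | ∃ C A1 A2 : Set Pt, IsConnCut S C A1 A2 ∧ C.Finite ∧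
    k = (C.ncard : ℕ∞) ∧
    α * (C.ncard : ℝ) + β < min (SpanE (A1 ∪ C)) (SpanE (A2 ∪ C)) }

/-- `Θ(S, α)`: as `θ` but over arbitrary (not necessarily connected) cuts. -/
noncomputable def bigTheta (S : Set Pt) (α : ℝ) : ℕ∞ :=
  sInf { k : ℕ∞ | ∃ C A1 A2 : Set Pt, IsCut S C A1 A2 ∧ C.Finite ∧
    k = (C.ncard : ℕ∞) ∧
    α * (C.ncard : ℝ) < min (SpanE (A1 ∪ C)) (SpanE (A2 ∪ C)) }

/-- `U` is a connected component of `W`. -/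
def IsCompOf (U W : Set Pt) : Prop := ∃ x ∈ W, U = {y ∈ W | ReachIn W x y}


section AuxCutDecomp

open Relation Set

lemma adjG_symm {p q : Pt} (h : adjG p q) : adjG q p := by
  simp only [adjG, Set.mem_insert_iff, Set.mem_singleton_iff] at h ⊢
  have e : p - q = -(q - p) := by ring
  rcases h with h | h | h | h | h | h <;> rw [e, h] <;>
    simp [Prod.ext_iff] <;> decide

lemma reach_mono {T T' : Set Pt} (h : T ⊆ T') {p q : Pt} (hr : ReachIn T p q) :
    ReachIn T' p q :=
  Relation.ReflTransGen.mono (r := fun a b => a ∈ T ∧ b ∈ T ∧ adjG a b)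
    (p := fun a b => a ∈ T' ∧ b ∈ T' ∧ adjG a b)
    (fun a b hab => ⟨h hab.1, h hab.2.1, hab.2.2⟩) _ _ hr

lemma reach_symm {T : Set Pt} {p q : Pt} (hr : ReachIn T p q) : ReachIn T q p :=
  (@Relation.ReflTransGen.symmetric _ (fun a b => a ∈ T ∧ b ∈ T ∧ adjG a b)
    ⟨fun a b hab => ⟨hab.2.1, hab.1, adjG_symm hab.2.2⟩⟩).symm _ _ hr

lemma hubConn {T : Set Pt} {x0 : Pt} (hx0 : x0 ∈ T) (h : ∀ y ∈ T, ReachIn T x0 y) :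
    ConnectedIn T := fun p hp q hq => (reach_symm (h p hp)).trans (h q hq)

lemma connectedIn_empty : ConnectedIn (∅ : Set Pt) :=
  fun p hp => absurd hp (Set.notMem_empty p)

lemma firstOut {T D : Set Pt} {a b : Pt} (h : ReachIn T a b) (ha : a ∈ D) (hb : b ∉ D) :
    ∃ z x, (z = a ∨ z ∈ T) ∧ z ∈ D ∧ x ∈ T ∧ x ∉ D ∧ adjG z x := by
  revert hb
  induction h with
  | refl => intro hb; exact absurd ha hb
  | @tail b c hseg hstep ih =>
      intro hc
      by_cases hbD : b ∈ D
      · exact ⟨b, c, Or.inr hstep.1, hbD, hstep.2.1, hc, hstep.2.2⟩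
      · exact ih hbD

lemma reach_pathSet {T : Set Pt} {a b : Pt} (ha : a ∈ T) (h : ReachIn T a b) :
    ∃ Q : Set Pt, Q.Finite ∧ Q ⊆ T ∧ a ∈ Q ∧ b ∈ Q ∧ ∀ x ∈ Q, ReachIn Q a x := by
  induction h with
  | refl =>
      refine ⟨{a}, Set.finite_singleton a, Set.singleton_subset_iff.mpr ha,
        Set.mem_singleton a, Set.mem_singleton a, ?_⟩
      intro x hx
      rw [Set.eq_of_mem_singleton hx]
      exact Relation.ReflTransGen.refl
  | @tail b c hseg hstep ih =>
      obtain ⟨Q, hQfin, hQT, haQ, hbQ, hreach⟩ := ih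
      refine ⟨insert c Q, hQfin.insert c, Set.insert_subset hstep.2.1 hQT,
        Set.mem_insert_of_mem _ haQ, Set.mem_insert c Q, ?_⟩
      intro x hx
      rcases Set.mem_insert_iff.mp hx with rfl | hxQ
      · exact (reach_mono (Set.subset_insert x Q) (hreach b hbQ)).tail
          ⟨Set.mem_insert_of_mem _ hbQ, Set.mem_insert x Q, hstep.2.2⟩
      · exact reach_mono (Set.subset_insert c Q) (hreach x hxQ)

lemma comp_reach {T : Set Pt} {x : Pt} (hx : x ∈ T) {y : Pt} (h : ReachIn T x y) :
    ReachIn {z ∈ T | ReachIn T x z} x y := by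
  induction h with
  | refl => exact Relation.ReflTransGen.refl
  | @tail b c hseg hstep ih =>
      exact ih.tail ⟨⟨hstep.1, hseg⟩, ⟨hstep.2.1, hseg.tail hstep⟩, hstep.2.2⟩

lemma isCompOf_props {U T : Set Pt} (h : IsCompOf U T) :
    U ⊆ T ∧ ∃ x0 ∈ U, (∀ y ∈ U, ReachIn U x0 y) ∧ (∀ y ∈ U, ∀ z ∈ T, adjG y z → z ∈ U) := by
  obtain ⟨x, hxT, rfl⟩ := h
  refine ⟨fun y hy => hy.1, x, ⟨hxT, Relation.ReflTransGen.refl⟩,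
    fun y hy => comp_reach hxT hy.2, ?_⟩
  rintro y hy z hz hadj
  exact ⟨hz, hy.2.tail ⟨hy.1, hz, hadj⟩⟩

lemma grow_conn {T : Set Pt} (hT : ConnectedIn T) {x0 : Pt} (hx0 : x0 ∈ T) :
    ∀ n : ℕ, (∃ K : Set Pt, K ⊆ T ∧ K.Finite ∧ x0 ∈ K ∧ (∀ y ∈ K, ReachIn K x0 y) ∧
      K.ncard = n + 1) ∨ (T.Finite ∧ T.ncard ≤ n) := by
  intro n
  induction n with
  | zero =>
      left
      refine ⟨{x0}, Set.singleton_subset_iff.mpr hx0, Set.finite_singleton _,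
        Set.mem_singleton _, ?_, Set.ncard_singleton _⟩
      intro y hy
      rw [Set.eq_of_mem_singleton hy]
      exact Relation.ReflTransGen.refl
  | succ n ih =>
      rcases ih with ⟨K, hKT, hKfin, hx0K, hKreach, hKn⟩ | ⟨hTfin, hTn⟩
      · by_cases hTK : T ⊆ K
        · right
          exact ⟨hKfin.subset hTK, (Set.ncard_le_ncard hTK hKfin).trans_eq hKn⟩
        · obtain ⟨w, hwT, hwK⟩ := Set.not_subset.mp hTK
          obtain ⟨z, x, _, hzK, hxT, hxK, hadj⟩ := firstOut (hT x0 hx0 w hwT) hx0K hwK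
          left
          refine ⟨insert x K, Set.insert_subset hxT hKT, hKfin.insert x,
            Set.mem_insert_of_mem _ hx0K, ?_, ?_⟩
          · intro y hy
            rcases Set.mem_insert_iff.mp hy with rfl | hyK
            · exact (reach_mono (Set.subset_insert y K) (hKreach z hzK)).tail
                ⟨Set.mem_insert_of_mem _ hzK, Set.mem_insert y K, hadj⟩
            · exact reach_mono (Set.subset_insert x K) (hKreach y hyK)
          · rw [Set.ncard_insert_of_notMem hxK hKfin, hKn]
      · right; exact ⟨hTfin, hTn.trans (Nat.le_succ n)⟩

/-- `E` admits a finite family of nonnegative triangles covering it. -/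
def CanCov (E : Set Pt) : Prop :=
  ∃ T : Finset Tri, (∀ t ∈ T, 0 ≤ triSpan t) ∧ (∀ p ∈ E, ∃ t ∈ T, inDefl t 2 p)

lemma spanE_nonneg (E : Set Pt) : 0 ≤ SpanE E := by
  unfold SpanE spanD
  apply Real.sInf_nonneg
  rintro s ⟨T, h1, _, rfl⟩
  exact Finset.sum_nonneg h1

lemma spanE_mono {E F : Set Pt} (h : E ⊆ F) (hF : CanCov F) : SpanE E ≤ SpanE F := by
  unfold SpanE spanD
  apply csInf_le_csInf
  · refine ⟨0, ?_⟩
    rintro s ⟨T, h1, _, rfl⟩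
    exact Finset.sum_nonneg h1
  · obtain ⟨T, h1, h2⟩ := hF
    exact ⟨∑ t ∈ T, triSpan t, T, h1, h2, rfl⟩
  · rintro s ⟨T, h1, h2, rfl⟩
    exact ⟨T, h1, fun p hp => h2 p (h hp), rfl⟩

lemma spanE_zero {E : Set Pt} (h : ¬ CanCov E) : SpanE E = 0 := by
  unfold SpanE spanD
  convert Real.sInf_empty
  rw [Set.eq_empty_iff_forall_notMem]
  rintro s ⟨T, h1, h2, rfl⟩
  exact h ⟨T, h1, h2⟩

lemma canCov_finite {F : Set Pt} (hF : F.Finite) : CanCov F := by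
  classical
  refine ⟨hF.toFinset.image fun p => ((2 : ℝ) - p.1, (2 : ℝ) - p.2, (2 : ℝ) + p.1 + p.2),
    ?_, ?_⟩
  · intro t ht
    simp only [Finset.mem_image] at ht
    obtain ⟨p, _, rfl⟩ := ht
    simp only [triSpan]
    linarith
  · intro p hp
    refine ⟨_, Finset.mem_image_of_mem _ (hF.mem_toFinset.mpr hp), ?_⟩
    refine ⟨?_, ?_, ?_⟩ <;> simp [inDefl] <;> linarith

lemma canCov_union {E F : Set Pt} (hE : CanCov E) (hF : CanCov F) : CanCov (E ∪ F) := by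
  classical
  obtain ⟨T1, h11, h12⟩ := hE
  obtain ⟨T2, h21, h22⟩ := hF
  refine ⟨T1 ∪ T2, ?_, ?_⟩
  · intro t ht
    rcases Finset.mem_union.mp ht with h | h
    · exact h11 t h
    · exact h21 t h
  · intro p hp
    rcases hp with hp | hp
    · obtain ⟨t, ht, hd⟩ := h12 p hp
      exact ⟨t, Finset.mem_union_left _ ht, hd⟩
    · obtain ⟨t, ht, hd⟩ := h22 p hp
      exact ⟨t, Finset.mem_union_right _ ht, hd⟩

lemma noCut {S C : Set Pt} {α β : ℝ} (hCfin : C.Finite)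
    (hsmall : (C.ncard : ℕ∞) < theta S α β) {K A1 A2 : Set Pt}
    (hcc : IsConnCut S K A1 A2) (hKfin : K.Finite) (hle : K.ncard ≤ C.ncard) :
    min (SpanE (A1 ∪ K)) (SpanE (A2 ∪ K)) ≤ α * (K.ncard : ℝ) + β := by
  by_contra h
  push_neg at h
  have h1 : theta S α β ≤ (K.ncard : ℕ∞) := by
    unfold theta
    exact sInf_le ⟨K, A1, A2, hcc, hKfin, rfl, h⟩
  have h2 : (K.ncard : ℕ∞) ≤ (C.ncard : ℕ∞) := by exact_mod_cast hle
  exact absurd (hsmall.trans_le (h1.trans h2)) (lt_irrefl _)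

lemma smallCut {S C : Set Pt} {α β : ℝ} (hCfin : C.Finite)
    (hsmall : (C.ncard : ℕ∞) < theta S α β) {K : Set Pt} (hKS : K ⊆ S) (hKfin : K.Finite)
    (hKconn : ConnectedIn K) (hle : K.ncard ≤ C.ncard)
    (hlt : α * (K.ncard : ℝ) + β < SpanE K) : False := by
  have hcc : IsConnCut S K ∅ ∅ := by
    refine ⟨⟨hKS, Set.empty_subset S, Set.empty_subset S, Set.disjoint_empty K,
      Set.disjoint_empty K, Set.disjoint_empty ∅, ?_⟩, ?_, ?_⟩
    · intro p hp
      exact absurd hp (Set.notMem_empty p)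
    · rw [Set.empty_union]; exact hKconn
    · rw [Set.empty_union]; exact hKconn
  have h := noCut hCfin hsmall hcc hKfin hle
  rw [Set.empty_union, min_self] at h
  linarith

lemma covBranch {S C : Set Pt} {α β : ℝ} (hCfin : C.Finite)
    (hsmall : (C.ncard : ℕ∞) < theta S α β) {U : Set Pt} (hUS : U ⊆ S)
    {x0 : Pt} (hx0 : x0 ∈ U) (hUreach : ∀ y ∈ U, ReachIn U x0 y)
    (hbad : α * (((U ∩ C).ncard : ℕ) : ℝ) + β < SpanE U) (hnc : ¬ CanCov U) : False := by
  have h0 : SpanE U = 0 := spanE_zero hnc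
  rw [h0] at hbad
  have hUconn : ConnectedIn U := hubConn hx0 hUreach
  have huC : (U ∩ C).ncard ≤ C.ncard := Set.ncard_le_ncard Set.inter_subset_right hCfin
  rcases Nat.eq_zero_or_pos (U ∩ C).ncard with h | h
  · apply smallCut hCfin hsmall (Set.empty_subset S) Set.finite_empty connectedIn_empty
      (by simp)
    rw [Set.ncard_empty]
    rw [h] at hbad
    have := spanE_nonneg (∅ : Set Pt)
    push_cast at hbad ⊢
    linarith
  · rcases grow_conn hUconn hx0 ((U ∩ C).ncard - 1) with
      ⟨K, hKT, hKfin, hx0K, hKreach, hKn⟩ | ⟨hUfin, hUn⟩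
    · have hKc : K.ncard = (U ∩ C).ncard := by omega
      apply smallCut hCfin hsmall (hKT.trans hUS) hKfin (hubConn hx0K hKreach) ?_ ?_
      · rw [hKc]; exact huC
      · rw [hKc]
        have := spanE_nonneg K
        linarith
    · have hle : (U ∩ C).ncard ≤ U.ncard := Set.ncard_le_ncard Set.inter_subset_left hUfin
      omega

lemma closedCut_symm {S C A B : Set Pt} (h : IsClosedCut S C A B) : IsClosedCut S C B A := by
  obtain ⟨⟨h1, h2, h3, h4, h5, h6, h7⟩, h8⟩ := h
  exact ⟨⟨h1, h3, h2, h5, h4, h6.symm, fun p hp q hq hre => h7 q hq p hp (reach_symm hre)⟩,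
    by rwa [Set.union_comm]⟩

end AuxCutDecomp


lemma mainCutLemma (S C A B : Set Pt) (α β : ℝ)
    (hS : ConnectedIn S) (hcut : IsClosedCut S C A B) (hCfin : C.Finite)
    (hsmall : (C.ncard : ℕ∞) < theta S α β) (U V : Set Pt)
    (hU : IsCompOf U (A ∪ C)) (hV : IsCompOf V (B ∪ C))
    (hbU : α * (((U ∩ C).ncard : ℕ) : ℝ) + β < SpanE U)
    (hbV : α * (((V ∩ C).ncard : ℕ) : ℝ) + β < SpanE V) :
    0 < α ∧ (V ∩ C).ncard < (U ∩ C).ncard := by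
  obtain ⟨⟨hCS, hAS, hBS, hdCA, hdCB, hdAB, hpaths⟩, hclosed⟩ := hcut
  obtain ⟨hUsub, x0, hx0U, hUreach, hUcl⟩ := isCompOf_props hU
  obtain ⟨hVsub, v1, hv1V, hVreach, hVcl⟩ := isCompOf_props hV
  have hUS : U ⊆ S := hUsub.trans (Set.union_subset hAS hCS)
  have hVS : V ⊆ S := hVsub.trans (Set.union_subset hBS hCS)
  have huC : (U ∩ C).ncard ≤ C.ncard := Set.ncard_le_ncard Set.inter_subset_right hCfin
  have hvC : (V ∩ C).ncard ≤ C.ncard := Set.ncard_le_ncard Set.inter_subset_right hCfin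
  -- coverability of U and V
  by_cases hcovU : CanCov U
  swap
  · exact (covBranch hCfin hsmall hUS hx0U hUreach hbU hcovU).elim
  by_cases hcovV : CanCov V
  swap
  · exact (covBranch hCfin hsmall hVS hv1V hVreach hbV hcovV).elim
  -- if U ⊆ C we are done by a small cut
  by_cases hUC : U ⊆ C
  · exact (smallCut hCfin hsmall hUS (hCfin.subset hUC) (hubConn hx0U hUreach)
      (Set.ncard_le_ncard hUC hCfin)
      (by rwa [Set.inter_eq_self_of_subset_left hUC] at hbU)).elim
  obtain ⟨u1, hu1U, hu1C⟩ := Set.not_subset.mp hUC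
  -- the ambient set S' and the component W of S' containing V
  set S' : Set Pt := S \ (U \ C) with hS'def
  have hBCS' : B ∪ C ⊆ S' := by
    intro y hy
    refine ⟨Set.union_subset hBS hCS hy, ?_⟩
    intro hmem
    rcases hUsub hmem.1 with hA | hC
    · rcases hy with hB | hC'
      · exact (hdAB.ne_of_mem hA hB) rfl
      · exact (hdCA.ne_of_mem hC' hA) rfl
    · exact hmem.2 hC
  have hv1S' : v1 ∈ S' := hBCS' (hVsub hv1V)
  set W : Set Pt := {y ∈ S' | ReachIn S' v1 y} with hWdef
  have hWsub : W ⊆ S' := fun y hy => hy.1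
  have hWS : W ⊆ S := fun y hy => hy.1.1
  have hv1W : v1 ∈ W := ⟨hv1S', Relation.ReflTransGen.refl⟩
  have hWreach : ∀ y ∈ W, ReachIn W v1 y := fun y hy => comp_reach hv1S' hy.2
  have hWcl : ∀ y ∈ W, ∀ z ∈ S', adjG y z → z ∈ W := fun y hy z hz hadj =>
    ⟨hz, hy.2.tail ⟨hy.1, hz, hadj⟩⟩
  have hVW : V ⊆ W := by
    intro y hy
    exact ⟨hBCS' (hVsub hy), reach_mono (hVsub.trans hBCS') (hVreach y hy)⟩
  -- the basic cutting set C1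
  set C1 : Set Pt := (U ∩ C) ∩ W with hC1def
  have hC1U : C1 ⊆ U := fun z hz => hz.1.1
  have hC1C : C1 ⊆ C := fun z hz => hz.1.2
  have hC1W : C1 ⊆ W := fun z hz => hz.2
  have hC1fin : C1.Finite := hCfin.subset hC1C
  have hUW : U ∩ W ⊆ C1 := by
    rintro z ⟨hzU, hzW⟩
    have hzC : z ∈ C := by
      by_contra hzC
      exact (hWsub hzW).2 ⟨hzU, hzC⟩
    exact ⟨⟨hzU, hzC⟩, hzW⟩
  have hc1u : C1.ncard ≤ (U ∩ C).ncard :=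
    Set.ncard_le_ncard (fun z hz => hz.1) (hCfin.subset Set.inter_subset_right)
  -- neighbours of W outside W are in U \ C
  have hnbrW : ∀ z, z ∈ S → z ∉ W → ∀ x ∈ W, adjG z x → z ∈ U \ C := by
    intro z hzS hzW x hxW hadj
    by_contra hzUC
    exact hzW (hWcl x hxW z ⟨hzS, hzUC⟩ (adjG_symm hadj))
  -- neighbours of U \ C inside W are in C1
  have hbd : ∀ z, z ∈ U \ C → ∀ x, x ∈ S → x ∈ W → adjG z x → x ∈ C1 := by
    intro z hz x hxS hxW hadj
    have hzA : z ∈ A := by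
      rcases hUsub hz.1 with hA | hC
      · exact hA
      · exact absurd hC hz.2
    have hxAC : x ∈ A ∪ C := by
      by_cases hxA : x ∈ A
      · exact Or.inl hxA
      · exact Or.inr (hclosed (Or.inl ⟨hxS, hxA, z, hzA, hadj⟩))
    exact hUW ⟨hUcl z hz.1 x hxAC hadj, hxW⟩
  -- paths from U avoiding any C' ⊇ C1 never enter W
  have hblock : ∀ C' : Set Pt, C1 ⊆ C' → ∀ p ∈ U \ C', ∀ q, ReachIn (S \ C') p q → q ∉ W := by
    intro C' hC1C' p hp q hre
    induction hre with
    | refl =>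
        intro hpW
        exact hp.2 (hC1C' (hUW ⟨hp.1, hpW⟩))
    | @tail b c hseg hstep ih =>
        intro hcW
        have hbUC : b ∈ U \ C := hnbrW b hstep.1.1 ih c hcW hstep.2.2
        exact hstep.2.1.2 (hC1C' (hbd b hbUC c hstep.2.1.1 hcW hstep.2.2))
  -- C1 is nonempty
  have hC1ne : C1.Nonempty := by
    have hreach : ReachIn S u1 v1 := hS u1 (hUS hu1U) v1 (hVS hv1V)
    have hu1W : u1 ∉ W := fun h => (hWsub h).2 ⟨hu1U, hu1C⟩
    obtain ⟨z, x, hza, hzD, hxS, hxD, hadj⟩ :=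
      firstOut (D := {p | p ∉ W}) hreach hu1W (not_not_intro hv1W)
    have hzS : z ∈ S := by
      rcases hza with rfl | h
      · exact hUS hu1U
      · exact h
    have hxW : x ∈ W := not_not.mp hxD
    exact ⟨x, hbd z (hnbrW z hzS hzD x hxW hadj) x hxS hxW hadj⟩
  -- the connecting path family P inside W
  have hPex : ∀ c : Pt, ∃ Q : Set Pt, Q.Finite ∧ Q ⊆ W ∧
      (c ∈ C1 → v1 ∈ Q ∧ c ∈ Q ∧ ∀ x ∈ Q, ReachIn Q v1 x) := by
    intro c
    by_cases hc : c ∈ C1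
    · obtain ⟨Q, h1, h2, h3, h4, h5⟩ := reach_pathSet hv1W (hWreach c (hC1W hc))
      exact ⟨Q, h1, h2, fun _ => ⟨h3, h4, h5⟩⟩
    · exact ⟨∅, Set.finite_empty, Set.empty_subset W, fun h => absurd h hc⟩
  choose Qf hQfin hQW hQp using hPex
  set P : Set Pt := ⋃ c ∈ C1, Qf c with hPdef
  have hPfin : P.Finite := Set.Finite.biUnion hC1fin (fun c _ => hQfin c)
  have hPW : P ⊆ W := Set.iUnion₂_subset (fun c _ => hQW c)
  have hQfP : ∀ c ∈ C1, Qf c ⊆ P := fun c hc => Set.subset_biUnion_of_mem hc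
  have hPreach : ∀ x ∈ P, ReachIn P v1 x := by
    intro x hx
    obtain ⟨c, hc, hxQ⟩ := Set.mem_iUnion₂.mp hx
    exact reach_mono (hQfP c hc) ((hQp c hc).2.2 x hxQ)
  have hC1reachP : ∀ c ∈ C1, ReachIn P v1 c := fun c hc =>
    reach_mono (hQfP c hc) ((hQp c hc).2.2 c (hQp c hc).2.1)
  have hVPW : V ∪ P ⊆ W := Set.union_subset hVW hPW
  -- the connected cut built from any admissible C'
  have mkCut : ∀ C' : Set Pt, C'.Finite → C1 ⊆ C' → C' ⊆ W →
      (∀ z ∈ C', ReachIn (U ∪ C') x0 z) → (∀ z ∈ C', ReachIn ((V ∪ P) ∪ C') v1 z) →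
      IsConnCut S C' (U \ C') ((V ∪ P) \ C') := by
    intro C' hC'fin hC1C' hC'W inv1 inv2
    have hC'S : C' ⊆ S := hC'W.trans hWS
    refine ⟨⟨hC'S, Set.diff_subset.trans hUS, Set.diff_subset.trans (hVPW.trans hWS),
      ?_, ?_, ?_, ?_⟩, ?_, ?_⟩
    · exact Set.disjoint_left.mpr (fun a ha hb => hb.2 ha)
    · exact Set.disjoint_left.mpr (fun a ha hb => hb.2 ha)
    · rw [Set.disjoint_left]
      rintro a ⟨haU, haC'⟩ ⟨haVP, _⟩
      exact haC' (hC1C' (hUW ⟨haU, hVPW haVP⟩))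
    · intro p hp q hq hre
      exact (hblock C' hC1C' p hp q hre) (hVPW hq.1)
    · rw [Set.diff_union_self]
      apply hubConn (Set.mem_union_left C' hx0U)
      intro y hy
      rcases hy with hyU | hyC'
      · exact reach_mono Set.subset_union_left (hUreach y hyU)
      · exact inv1 y hyC'
    · rw [Set.diff_union_self]
      apply hubConn (Set.mem_union_left C' (Set.mem_union_left P hv1V))
      intro y hy
      rcases hy with hyVP | hyC'
      · rcases hyVP with hyV | hyP
        · exact reach_mono (Set.subset_union_left.trans Set.subset_union_left)
            (hVreach y hyV)
        · exact reach_mono (Set.subset_union_right.trans Set.subset_union_left)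
            (hPreach y hyP)
      · exact inv2 y hyC'
  -- span comparisons
  have spanU_le : ∀ C' : Set Pt, C'.Finite → SpanE U ≤ SpanE (U ∪ C') := fun C' h =>
    spanE_mono Set.subset_union_left (canCov_union hcovU (canCov_finite h))
  have spanV_le : ∀ C' : Set Pt, C'.Finite → SpanE V ≤ SpanE ((V ∪ P) ∪ C') := fun C' h =>
    spanE_mono (Set.subset_union_left.trans Set.subset_union_left)
      (canCov_union (canCov_union hcovV (canCov_finite hPfin)) (canCov_finite h))
  -- the base invariants for C1 itself
  have inv1C1 : ∀ z ∈ C1, ReachIn (U ∪ C1) x0 z := fun z hz =>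
    reach_mono Set.subset_union_left (hUreach z (hC1U hz))
  have inv2C1 : ∀ z ∈ C1, ReachIn ((V ∪ P) ∪ C1) v1 z := fun z hz =>
    reach_mono (Set.subset_union_right.trans Set.subset_union_left) (hC1reachP z hz)
  have hcutC1 := mkCut C1 hC1fin (subset_refl C1) hC1W inv1C1 inv2C1
  have hminC1 := noCut hCfin hsmall hcutC1 hC1fin (hc1u.trans huC)
  rw [Set.diff_union_self, Set.diff_union_self,
    Set.union_eq_self_of_subset_right hC1U] at hminC1
  rcases lt_trichotomy α 0 with hα | hα | hα
  · -- negative slope: pad the cutting set up to size |C|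
    exfalso
    have pad : ∀ m : ℕ, ∀ C' : Set Pt, C'.Finite → C1 ⊆ C' → C' ⊆ W →
        (∀ z ∈ C', ReachIn (U ∪ C') x0 z) → (∀ z ∈ C', ReachIn ((V ∪ P) ∪ C') v1 z) →
        C'.ncard + m = C.ncard → False := by
      intro m
      induction m with
      | zero =>
          intro C' hC'fin hC1C' hC'W inv1 inv2 hn
          have hcc := mkCut C' hC'fin hC1C' hC'W inv1 inv2
          have hmin := noCut hCfin hsmall hcc hC'fin (by omega)
          rw [Set.diff_union_self, Set.diff_union_self] at hmin
          have e1 : α * (C'.ncard : ℝ) ≤ α * (((U ∩ C).ncard : ℕ) : ℝ) := by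
            apply mul_le_mul_of_nonpos_left _ hα.le
            exact_mod_cast (by omega : (U ∩ C).ncard ≤ C'.ncard)
          have e2 : α * (C'.ncard : ℝ) ≤ α * (((V ∩ C).ncard : ℕ) : ℝ) := by
            apply mul_le_mul_of_nonpos_left _ hα.le
            exact_mod_cast (by omega : (V ∩ C).ncard ≤ C'.ncard)
          have h1 : α * (C'.ncard : ℝ) + β < SpanE (U ∪ C') := by
            have := spanU_le C' hC'fin
            linarith
          have h2 : α * (C'.ncard : ℝ) + β < SpanE ((V ∪ P) ∪ C') := by
            have := spanV_le C' hC'fin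
            linarith
          exact absurd hmin (not_le.mpr (lt_min h1 h2))
      | succ m ih =>
          intro C' hC'fin hC1C' hC'W inv1 inv2 hn
          by_cases hWC' : W ⊆ C'
          · have hVfin : V.Finite := hC'fin.subset (hVW.trans hWC')
            have hVsize : V.ncard ≤ C.ncard := by
              have := Set.ncard_le_ncard (hVW.trans hWC') hC'fin
              omega
            apply smallCut hCfin hsmall hVS hVfin (hubConn hv1V hVreach) hVsize
            have hvV : (((V ∩ C).ncard : ℕ) : ℝ) ≤ (V.ncard : ℝ) := by
              exact_mod_cast Set.ncard_le_ncard Set.inter_subset_left hVfin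
            have := mul_le_mul_of_nonpos_left hvV hα.le
            linarith
          · obtain ⟨w, hwW, hwC'⟩ := Set.not_subset.mp hWC'
            obtain ⟨c0, hc0⟩ := hC1ne
            have hreach : ReachIn W c0 w :=
              (reach_symm (hWreach c0 (hC1W hc0))).trans (hWreach w hwW)
            obtain ⟨z, x, hza, hzC', hxW, hxC', hadj⟩ :=
              firstOut (D := C') hreach (hC1C' hc0) hwC'
            have hsub1 : U ∪ C' ⊆ U ∪ insert x C' :=
              Set.union_subset_union_right U (Set.subset_insert x C')
            have hsub2 : (V ∪ P) ∪ C' ⊆ (V ∪ P) ∪ insert x C' :=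
              Set.union_subset_union_right (V ∪ P) (Set.subset_insert x C')
            apply ih (insert x C') (hC'fin.insert x) (hC1C'.trans (Set.subset_insert x C'))
              (Set.insert_subset hxW hC'W) ?_ ?_ ?_
            · intro y hy
              rcases Set.mem_insert_iff.mp hy with rfl | hyC'
              · exact (reach_mono hsub1 (inv1 z hzC')).tail
                  ⟨Or.inr (Set.mem_insert_of_mem _ hzC'), Or.inr (Set.mem_insert y C'), hadj⟩
              · exact reach_mono hsub1 (inv1 y hyC')
            · intro y hy
              rcases Set.mem_insert_iff.mp hy with rfl | hyC'
              · exact (reach_mono hsub2 (inv2 z hzC')).tail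
                  ⟨Or.inr (Set.mem_insert_of_mem _ hzC'), Or.inr (Set.mem_insert y C'), hadj⟩
              · exact reach_mono hsub2 (inv2 y hyC')
            · rw [Set.ncard_insert_of_notMem hxC' hC'fin]
              omega
    exact pad (C.ncard - C1.ncard) C1 hC1fin (subset_refl _) hC1W inv1C1 inv2C1
      (by have := hc1u.trans huC; omega)
  · -- zero slope: direct contradiction
    exfalso
    subst hα
    rcases min_le_iff.mp hminC1 with h | h
    · simp only [zero_mul, zero_add] at h hbU
      linarith
    · have := spanV_le C1 hC1fin
      simp only [zero_mul, zero_add] at h hbV this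
      linarith
  · -- positive slope
    refine ⟨hα, ?_⟩
    rcases min_le_iff.mp hminC1 with h | h
    · exfalso
      have : α * (C1.ncard : ℝ) ≤ α * (((U ∩ C).ncard : ℕ) : ℝ) :=
        mul_le_mul_of_nonneg_left (by exact_mod_cast hc1u) hα.le
      linarith
    · have hV' : SpanE V ≤ α * (C1.ncard : ℝ) + β := (spanV_le C1 hC1fin).trans h
      have hmul : α * (((V ∩ C).ncard : ℕ) : ℝ) < α * (C1.ncard : ℝ) := by linarith
      have hlt : (((V ∩ C).ncard : ℕ) : ℝ) < (C1.ncard : ℝ) :=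
        lt_of_mul_lt_mul_left hmul hα.le
      have : (V ∩ C).ncard < C1.ncard := by exact_mod_cast hlt
      omega

/-- Cut decomposition lemma: for a closed cut `(C,A,B)` of a connected `S`
with `|C| < θ(S,α,β)`, either every component `U` of `A ∪ C` satisfies
`Span(U) ≤ α|U ∩ C| + β`, or every component `V` of `B ∪ C` does. -/
theorem cut_decomposition (S C A B : Set Pt) (α β : ℝ)
    (hS : ConnectedIn S) (hcut : IsClosedCut S C A B) (hCfin : C.Finite)
    (hsmall : (C.ncard : ℕ∞) < theta S α β) :
    (∀ U, IsCompOf U (A ∪ C) → SpanE U ≤ α * ((U ∩ C).ncard : ℝ) + β) ∨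
    (∀ V, IsCompOf V (B ∪ C) → SpanE V ≤ α * ((V ∩ C).ncard : ℝ) + β) := by
  by_contra hcon
  push_neg at hcon
  obtain ⟨⟨U, hU, hbU⟩, ⟨V, hV, hbV⟩⟩ := hcon
  have h1 := mainCutLemma S C A B α β hS hcut hCfin hsmall U V hU hV hbU hbV
  have h2 := mainCutLemma S C B A α β hS (closedCut_symm hcut) hCfin hsmall V U hV hU hbV hbU
  have := h1.2
  have := h2.2
  omega
end

section
/- (Pre-image sandwich) Let (C,R1,R2) be a closed cut of Q(S) and define S_j = Q^{-1}(R_j, S) = {a ∈ S : Q(a) ∩ R_j ≠ ∅}. Then R_j ⊆ Q(S_j) ⊆ R_j ∪ C for j = 1, 2, and S_1, S_2 are disjoint. -/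
open Set

lemma tile_adj_or_eq {a p q : Pt} (hp : p ∈ tile a) (hq : q ∈ tile a) :
    p = q ∨ adjG p q := by
  simp only [tile, Set.mem_insert_iff, Set.mem_singleton_iff] at hp hq
  rcases hp with rfl | rfl | rfl <;> rcases hq with rfl | rfl | rfl <;>
    simp [adjG, Prod.ext_iff, Prod.sub_def, Prod.add_def] <;> omega

lemma reachIn_symm {T : Set Pt} {p q : Pt} (h : ReachIn T p q) : ReachIn T q p := by
  refine (@Relation.ReflTransGen.symmetric _ _ ⟨?_⟩).symm _ _ h
  rintro a b ⟨ha, hb, hadj⟩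
  refine ⟨hb, ha, ?_⟩
  simp only [adjG, Set.mem_insert_iff, Set.mem_singleton_iff, Prod.ext_iff,
    Prod.sub_def] at hadj ⊢
  omega

lemma sandwich_half (S C R1 R2 : Set Pt)
    (hcut : IsClosedCut (QOp S) C R1 R2) :
    R1 ⊆ QOp {a ∈ S | (tile a ∩ R1).Nonempty} ∧
    QOp {a ∈ S | (tile a ∩ R1).Nonempty} ⊆ R1 ∪ C := by
  obtain ⟨⟨hC, hR1, hR2, _, _, _, _⟩, hbd⟩ := hcut
  constructor
  · intro p hp
    obtain ⟨a, ha, hpa⟩ : ∃ a ∈ S, p ∈ tile a := by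
      have := hR1 hp; simpa [QOp] using this
    exact Set.mem_biUnion ⟨ha, ⟨p, hpa, hp⟩⟩ hpa
  · intro p hp
    obtain ⟨a, ⟨haS, q, hqT, hqR⟩, hpT⟩ : ∃ a, (a ∈ S ∧ ∃ q ∈ tile a, q ∈ R1) ∧ p ∈ tile a := by
      simpa [QOp, Set.mem_setOf_eq, Set.Nonempty, Set.mem_inter_iff, and_comm, and_assoc]
        using hp
    by_cases hpR : p ∈ R1
    · exact Or.inl hpR
    rcases tile_adj_or_eq hqT hpT with rfl | hadj
    · exact Or.inl hqR
    · refine Or.inr (hbd (Or.inl ?_))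
      exact ⟨Set.mem_biUnion haS hpT, hpR, q, hqR, hadj⟩

/-- Pre-image sandwich: for a closed cut `(C,R1,R2)` of `Q(S)` and
`S_j = {a ∈ S : Q(a) ∩ R_j ≠ ∅}`, we have `R_j ⊆ Q(S_j) ⊆ R_j ∪ C`,
and `S_1, S_2` are disjoint. -/
theorem preimage_sandwich (S C R1 R2 : Set Pt)
    (hcut : IsClosedCut (QOp S) C R1 R2) :
    R1 ⊆ QOp {a ∈ S | (tile a ∩ R1).Nonempty} ∧
    QOp {a ∈ S | (tile a ∩ R1).Nonempty} ⊆ R1 ∪ C ∧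
    R2 ⊆ QOp {a ∈ S | (tile a ∩ R2).Nonempty} ∧
    QOp {a ∈ S | (tile a ∩ R2).Nonempty} ⊆ R2 ∪ C ∧
    Disjoint {a ∈ S | (tile a ∩ R1).Nonempty} {a ∈ S | (tile a ∩ R2).Nonempty} := by
  have swap : IsClosedCut (QOp S) C R2 R1 := by
    obtain ⟨⟨hC, hR1, hR2, d1, d2, d3, hpath⟩, hbd⟩ := hcut
    refine ⟨⟨hC, hR2, hR1, d2, d1, d3.symm, ?_⟩, by
      rw [Set.union_comm]; exact hbd⟩
    intro p hp q hq hr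
    exact hpath q hq p hp (reachIn_symm hr)
  obtain ⟨h1, h2⟩ := sandwich_half S C R1 R2 hcut
  obtain ⟨h3, h4⟩ := sandwich_half S C R2 R1 swap
  refine ⟨h1, h2, h3, h4, ?_⟩
  rw [Set.disjoint_left]
  rintro a ⟨haS, q1, hq1T, hq1R⟩ ⟨-, q2, hq2T, hq2R⟩
  obtain ⟨⟨hC, hR1, hR2, dC1, dC2, d12, -⟩, hbd⟩ := hcut
  rcases tile_adj_or_eq hq1T hq2T with rfl | hadj
  · exact Set.disjoint_left.mp d12 hq1R hq2R
  · have hq2C : q2 ∈ C := hbd (Or.inl ⟨hR2 hq2R, fun h => Set.disjoint_left.mp d12 h hq2R,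
      q1, hq1R, hadj⟩)
    exact Set.disjoint_left.mp dC2 hq2C hq2R
end
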